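/- Let q be a Boolean conjunctive query, Dˣ a set of exogenous tuples with Dˣ ⊭ q, and Dⁿ a set of candidate missing endogenous tuples with Dˣ ∪ Dⁿ ⊨ q. Then a tuple t ∈ Dⁿ is an actual Why-No cause for q if and only if there exists a non-redundant member c of the n-lineage of q on Dˣ ∪ Dⁿ with t ∈ c. -/

import Mathlib

/-- An atom of a Boolean conjunctive query: a relation symbol applied to a
tuple (list) of variables, marked endogenous (`endo = true`) or exogenous. -/
structure DBAtom (Rel Var : Type) where
  rel : Rel
  args : List Var
  endo : Bool
deriving DecidableEq

/-- A database tuple: it belongs to one relation and carries a tuple of constants. -/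
structure DBTup (Rel Const : Type) where
  rel : Rel
  args : List Const
deriving DecidableEq

/-- The tuple obtained by applying a valuation `θ` to an atom. -/
def DBAtom.app {Rel Var Const : Type} (g : DBAtom Rel Var) (θ : Var → Const) :
    DBTup Rel Const :=
  ⟨g.rel, g.args.map θ⟩

/-- `dbSat D q` holds iff `D ⊨ q`: there is a valuation `θ` of the variables of `q`
into the domain with `θ(g) ∈ D` for every atom `g` of `q`. -/
def dbSat {Rel Var Const : Type} (D : Finset (DBTup Rel Const))
    (q : Finset (DBAtom Rel Var)) : Prop :=
  ∃ θ : Var → Const, ∀ g ∈ q, g.app θ ∈ D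

/-- `t` is an actual cause for `q` in `D` (with endogenous tuples `Dn`):
there is a contingency set `Γ ⊆ Dn` with `t ∉ Γ` such that
`D − Γ ⊨ q` and `D − Γ − {t} ⊭ q`. -/
def isActualCause {Rel Var Const : Type} [DecidableEq Rel] [DecidableEq Const]
    (q : Finset (DBAtom Rel Var)) (D Dn : Finset (DBTup Rel Const))
    (t : DBTup Rel Const) : Prop :=
  ∃ Γ : Finset (DBTup Rel Const), Γ ⊆ Dn ∧ t ∉ Γ ∧
    dbSat (D \ Γ) q ∧ ¬ dbSat ((D \ Γ).erase t) q

/-- The n-lineage of `q` on `D`: the family of the sets `c^θ ∩ Dⁿ`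
over all valuations `θ` with `θ(g) ∈ D` for all atoms `g` of `q`, where
`c^θ = {θ(g) : g an atom of q}`. -/
def nLineage {Rel Var Const : Type} [DecidableEq Rel] [DecidableEq Const]
    (q : Finset (DBAtom Rel Var)) (D Dn : Finset (DBTup Rel Const)) :
    Set (Finset (DBTup Rel Const)) :=
  {c | ∃ θ : Var → Const, (∀ g ∈ q, g.app θ ∈ D) ∧
    c = (q.image fun g => g.app θ) ∩ Dn}

/-- `t ∈ Dn` is an actual Why-No cause for `q` (with actual database `Dˣ` and
candidate missing tuples `Dⁿ`): there is a contingency set `Γ ⊆ Dⁿ` with `t ∉ Γ`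
such that `Dˣ ∪ Γ ⊭ q` and `Dˣ ∪ Γ ∪ {t} ⊨ q`. -/
def isWhyNoCause {Rel Var Const : Type} [DecidableEq Rel] [DecidableEq Const]
    (q : Finset (DBAtom Rel Var)) (Dx Dn : Finset (DBTup Rel Const))
    (t : DBTup Rel Const) : Prop :=
  ∃ Γ : Finset (DBTup Rel Const), Γ ⊆ Dn ∧ t ∉ Γ ∧
    ¬ dbSat (Dx ∪ Γ) q ∧ dbSat (insert t (Dx ∪ Γ)) q

/-- Let `q` be a Boolean conjunctive query, `Dˣ` a set of exogenous
tuples with `Dˣ ⊭ q`, and `Dⁿ` a set of candidate missing endogenous tuples with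
`Dˣ ∪ Dⁿ ⊨ q`. Then `t ∈ Dⁿ` is an actual Why-No cause for `q` iff there exists a
non-redundant member `c` of the n-lineage of `q` on `Dˣ ∪ Dⁿ` with `t ∈ c`. -/
theorem statement2 {Rel Var Const : Type}
    [DecidableEq Rel] [DecidableEq Var] [DecidableEq Const]
    (q : Finset (DBAtom Rel Var)) (Dx Dn : Finset (DBTup Rel Const))
    (hdisj : Disjoint Dx Dn)
    (hx : ¬ dbSat (Const := Const) Dx q) (hD : dbSat (Dx ∪ Dn) q)
    (t : DBTup Rel Const) (ht : t ∈ Dn) :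
    isWhyNoCause q Dx Dn t ↔
      ∃ c ∈ nLineage q (Dx ∪ Dn) Dn,
        (∀ c' ∈ nLineage q (Dx ∪ Dn) Dn, ¬ c' ⊂ c) ∧ t ∈ c := by
  classical
  constructor
  · rintro ⟨Γ, hΓ, htΓ, hno, hyes⟩
    obtain ⟨θ, hθ⟩ := hyes
    set c0 : Finset (DBTup Rel Const) := (q.image fun g => g.app θ) ∩ Dn with hc0
    have hθD : ∀ g ∈ q, g.app θ ∈ Dx ∪ Dn := by
      intro g hg
      rcases Finset.mem_insert.1 (hθ g hg) with h | h
      · exact h ▸ Finset.mem_union_right _ ht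
      · rcases Finset.mem_union.1 h with h | h
        · exact Finset.mem_union_left _ h
        · exact Finset.mem_union_right _ (hΓ h)
    have hc0lin : c0 ∈ nLineage q (Dx ∪ Dn) Dn := ⟨θ, hθD, rfl⟩
    have hc0sub : c0 ⊆ insert t Γ := by
      intro x hx'
      rw [hc0, Finset.mem_inter] at hx'
      obtain ⟨hxq, hxn⟩ := hx'
      obtain ⟨g, hg, rfl⟩ := Finset.mem_image.1 hxq
      rcases Finset.mem_insert.1 (hθ g hg) with h | h
      · exact Finset.mem_insert.2 (Or.inl h)
      · rcases Finset.mem_union.1 h with h | h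
        · exact absurd hxn (Finset.disjoint_left.1 hdisj h)
        · exact Finset.mem_insert_of_mem h
    -- any lineage member contained in `insert t Γ` must contain `t`
    have key : ∀ c' ∈ nLineage q (Dx ∪ Dn) Dn, c' ⊆ insert t Γ → t ∈ c' := by
      rintro c' ⟨θ', hθ', rfl⟩ hsub
      by_contra htc'
      apply hno
      refine ⟨θ', fun g hg => ?_⟩
      rcases Finset.mem_union.1 (hθ' g hg) with h | h
      · exact Finset.mem_union_left _ h
      · have hmem : g.app θ' ∈ (q.image fun g => g.app θ') ∩ Dn :=
          Finset.mem_inter.2 ⟨Finset.mem_image_of_mem _ hg, h⟩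
        rcases Finset.mem_insert.1 (hsub hmem) with h' | h'
        · exact absurd (h' ▸ hmem) htc'
        · exact Finset.mem_union_right _ h'
    -- pick a minimal lineage member inside c0
    set S : Finset (Finset (DBTup Rel Const)) :=
      c0.powerset.filter (fun c => c ∈ nLineage q (Dx ∪ Dn) Dn) with hS
    have hc0S : c0 ∈ S := by
      rw [hS, Finset.mem_filter, Finset.mem_powerset]
      exact ⟨subset_rfl, hc0lin⟩
    obtain ⟨m, hmS, hmmin⟩ := Finset.exists_minimal ⟨c0, hc0S⟩
    rw [hS, Finset.mem_filter, Finset.mem_powerset] at hmS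
    obtain ⟨hmc0, hmlin⟩ := hmS
    refine ⟨m, hmlin, ?_, key m hmlin (hmc0.trans hc0sub)⟩
    intro c' hc' hss
    exact (not_subset_of_ssubset hss) (hmmin (y := c') (show c' ∈ S by
      rw [hS, Finset.mem_filter, Finset.mem_powerset]
      exact ⟨(hss.subset).trans hmc0, hc'⟩) hss.subset)
  · rintro ⟨c, hclin, hmin, htc⟩
    obtain ⟨θ, hθ, hceq⟩ := hclin
    refine ⟨c.erase t, ?_, Finset.notMem_erase _ _, ?_, ?_⟩
    · intro x hx'
      have : x ∈ c := Finset.mem_of_mem_erase hx'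
      rw [hceq] at this
      exact (Finset.mem_inter.1 this).2
    · rintro ⟨θ', hθ'⟩
      have hθ'D : ∀ g ∈ q, g.app θ' ∈ Dx ∪ Dn := by
        intro g hg
        rcases Finset.mem_union.1 (hθ' g hg) with h | h
        · exact Finset.mem_union_left _ h
        · have hc : g.app θ' ∈ c := Finset.mem_of_mem_erase h
          rw [hceq] at hc
          exact Finset.mem_union_right _ (Finset.mem_inter.1 hc).2
      have hc'lin : ((q.image fun g => g.app θ') ∩ Dn) ∈ nLineage q (Dx ∪ Dn) Dn :=
        ⟨θ', hθ'D, rfl⟩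
      apply hmin _ hc'lin
      have hsub : (q.image fun g => g.app θ') ∩ Dn ⊆ c.erase t := by
        intro x hx'
        obtain ⟨hxq, hxn⟩ := Finset.mem_inter.1 hx'
        obtain ⟨g, hg, rfl⟩ := Finset.mem_image.1 hxq
        rcases Finset.mem_union.1 (hθ' g hg) with h | h
        · exact absurd hxn (Finset.disjoint_left.1 hdisj h)
        · exact h
      exact Finset.ssubset_of_subset_of_ssubset hsub (Finset.erase_ssubset htc)
    · refine ⟨θ, fun g hg => ?_⟩
      rcases Finset.mem_union.1 (hθ g hg) with h | h
      · exact Finset.mem_insert_of_mem (Finset.mem_union_left _ h)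
      · have hmem : g.app θ ∈ c := by
          rw [hceq]
          exact Finset.mem_inter.2 ⟨Finset.mem_image_of_mem _ hg, h⟩
        by_cases heq : g.app θ = t
        · exact heq ▸ Finset.mem_insert_self _ _
        · exact Finset.mem_insert_of_mem
            (Finset.mem_union_right _ (Finset.mem_erase.2 ⟨heq, hmem⟩))
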